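/- Every element r ∈ ℚ_p that is algebraic over ℚ belongs to (ℚ_p)~, i.e., admits a finite adequate set in ℚ_p. -/

import Mathlib

/-- A finite set `A` is adequate for `r`: it contains `r`, and every map `f`
preserving `1` (when `1 ∈ A`) and preserving sums/products lying in `A` fixes `r`. -/
def Adequate {K : Type*} [Field K] (A : Finset K) (r : K) : Prop :=
  r ∈ A ∧ ∀ f : K → K,
    ((1 : K) ∈ A → f 1 = 1) →
    (∀ a b : K, a ∈ A → b ∈ A → a + b ∈ A → f (a + b) = f a + f b) →
    (∀ a b : K, a ∈ A → b ∈ A → a * b ∈ A → f (a * b) = f a * f b) →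
    f r = r

open Finset

namespace PadicAdequate

variable {p : ℕ} [Fact p.Prime]

noncomputable local instance : DecidableEq ℚ_[p] := Classical.decEq _

def Good (f : ℚ_[p] → ℚ_[p]) (A : Finset ℚ_[p]) : Prop :=
  ((1 : ℚ_[p]) ∈ A → f 1 = 1) ∧
  (∀ a b : ℚ_[p], a ∈ A → b ∈ A → a + b ∈ A → f (a + b) = f a + f b) ∧
  (∀ a b : ℚ_[p], a ∈ A → b ∈ A → a * b ∈ A → f (a * b) = f a * f b)

lemma Good.mono {f : ℚ_[p] → ℚ_[p]} {A B : Finset ℚ_[p]} (h : Good f A) (hBA : B ⊆ A) :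
    Good f B :=
  ⟨fun h1 => h.1 (hBA h1), fun a b ha hb hab => h.2.1 a b (hBA ha) (hBA hb) (hBA hab),
   fun a b ha hb hab => h.2.2 a b (hBA ha) (hBA hb) (hBA hab)⟩

noncomputable def intSet (M : ℕ) : Finset ℚ_[p] :=
  Finset.image (fun k : ℤ => (k : ℚ_[p])) (Finset.Icc (-(M : ℤ)) (M : ℤ))

lemma mem_intSet {M : ℕ} {k : ℤ} (h : k.natAbs ≤ M) : (k : ℚ_[p]) ∈ intSet M := by
  refine Finset.mem_image.2 ⟨k, ?_, rfl⟩
  rw [Finset.mem_Icc]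
  omega

lemma good_int {f : ℚ_[p] → ℚ_[p]} {M : ℕ} (h : Good f (intSet M)) :
    ∀ k : ℤ, k.natAbs ≤ M → f k = k := by
  have h0 : f 0 = 0 := by
    have m0 : ((0 : ℤ) : ℚ_[p]) ∈ intSet M := mem_intSet (by omega)
    rw [Int.cast_zero] at m0
    have := h.2.1 0 0 m0 m0 (by simpa using m0)
    rw [add_zero] at this
    exact left_eq_add.1 this
  have hnat : ∀ n : ℕ, n ≤ M → f n = n := by
    intro n
    induction n with
    | zero => intro _; simpa using h0
    | succ n ih =>
      intro hn
      have h1 : f 1 = 1 := by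
        have m1 : ((1 : ℤ) : ℚ_[p]) ∈ intSet M := mem_intSet (by omega)
        rw [Int.cast_one] at m1
        exact h.1 m1
      have mn : ((n : ℚ_[p])) ∈ intSet M := by
        have := mem_intSet (p := p) (M := M) (k := (n : ℤ)) (by omega)
        simpa using this
      have m1 : ((1 : ℚ_[p])) ∈ intSet M := by
        have := mem_intSet (p := p) (M := M) (k := (1 : ℤ)) (by omega)
        simpa using this
      have mn1 : ((n : ℚ_[p]) + 1) ∈ intSet M := by
        have := mem_intSet (p := p) (M := M) (k := ((n : ℤ) + 1)) (by omega)
        simpa using this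
      have := h.2.1 _ _ mn m1 mn1
      push_cast
      rw [this, ih (by omega), h1]
  intro k hk
  rcases le_or_gt 0 k with hk0 | hk0
  · obtain ⟨n, rfl⟩ := Int.eq_ofNat_of_zero_le hk0
    have := hnat n (by omega)
    simpa using this
  · set n : ℕ := (-k).natAbs with hn
    have hkn : (k : ℚ_[p]) = -(n : ℚ_[p]) := by
      have : (k : ℤ) = -(n : ℤ) := by omega
      rw [this]; push_cast; ring
    have mk : ((k : ℤ) : ℚ_[p]) ∈ intSet M := mem_intSet hk
    have mn : ((n : ℚ_[p])) ∈ intSet M := by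
      have := mem_intSet (p := p) (M := M) (k := (n : ℤ)) (by omega)
      simpa using this
    have m0 : ((0 : ℚ_[p])) ∈ intSet M := by
      have := mem_intSet (p := p) (M := M) (k := (0 : ℤ)) (by omega)
      simpa using this
    have hsum : (k : ℚ_[p]) + (n : ℚ_[p]) = 0 := by rw [hkn]; ring
    have := h.2.1 _ _ mk mn (by rw [hsum]; exact m0)
    rw [hsum, h0, hnat n (by omega)] at this
    have hfk : f k = -(n : ℚ_[p]) := eq_neg_of_add_eq_zero_left this.symm
    rw [hfk, ← hkn]

def ratM (q : ℚ) : ℕ := max q.num.natAbs q.den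

noncomputable def ratSet (q : ℚ) : Finset ℚ_[p] := intSet (ratM q) ∪ {(q : ℚ_[p])}

lemma one_mem_ratSet (q : ℚ) : (1 : ℚ_[p]) ∈ ratSet q := by
  refine Finset.mem_union_left _ ?_
  have := mem_intSet (p := p) (M := ratM q) (k := (1 : ℤ))
    (by simp [ratM]; right; exact q.pos)
  simpa using this

lemma good_rat {f : ℚ_[p] → ℚ_[p]} {q : ℚ} (h : Good f (ratSet q)) :
    f (q : ℚ_[p]) = (q : ℚ_[p]) := by
  have hint := good_int (h.mono Finset.subset_union_left)
  have hden : ((q.den : ℤ) : ℚ_[p]) ≠ 0 := by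
    simp [q.den_nz]
  have key : (q : ℚ_[p]) * ((q.den : ℤ) : ℚ_[p]) = ((q.num : ℤ) : ℚ_[p]) := by
    push_cast
    rw [Rat.cast_def]
    field_simp
  have mq : (q : ℚ_[p]) ∈ ratSet q := Finset.mem_union_right _ (by simp)
  have mden : ((q.den : ℤ) : ℚ_[p]) ∈ ratSet q :=
    Finset.mem_union_left _ (mem_intSet (by simp [ratM]))
  have mnum : ((q.num : ℤ) : ℚ_[p]) ∈ ratSet q :=
    Finset.mem_union_left _ (mem_intSet (by simp [ratM]))
  have := h.2.2 _ _ mq mden (by rw [key]; exact mnum)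
  rw [key, hint _ (by simp [ratM]), hint _ (by simp [ratM])] at this
  have : f (q : ℚ_[p]) * ((q.den : ℤ) : ℚ_[p]) = (q : ℚ_[p]) * ((q.den : ℤ) : ℚ_[p]) := by
    rw [key]; exact this.symm
  exact mul_right_cancel₀ hden this

noncomputable def powSet (r : ℚ_[p]) (n : ℕ) : Finset ℚ_[p] :=
  Finset.image (fun k : ℕ => r ^ k) (Finset.range (n + 1))

lemma mem_powSet {r : ℚ_[p]} {n k : ℕ} (h : k ≤ n) : r ^ k ∈ powSet r n :=
  Finset.mem_image.2 ⟨k, Finset.mem_range.2 (by omega), rfl⟩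

lemma good_pow {f : ℚ_[p] → ℚ_[p]} {r : ℚ_[p]} {n : ℕ} (h : Good f (powSet r n))
    (hn : 1 ≤ n) : ∀ k, k ≤ n → f (r ^ k) = (f r) ^ k := by
  intro k
  induction k with
  | zero =>
    intro _
    have h1 : f 1 = 1 := h.1 (by simpa using mem_powSet (r := r) (Nat.zero_le n))
    simpa using h1
  | succ k ih =>
    intro hk
    rcases Nat.eq_zero_or_pos k with rfl | hkpos
    · simp
    · have hmul := h.2.2 _ _ (mem_powSet (by omega : k ≤ n))
        (by simpa using mem_powSet (r := r) (by omega : 1 ≤ n))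
        (by rw [← pow_succ]; exact mem_powSet hk)
      rw [pow_succ] at *
      rw [hmul, ih (by omega), pow_succ]

/-- Gadget forcing `∑ i ≤ n, c i * (f r)^i = 0` given `∑ i ≤ n, c i * r^i = 0`. -/
noncomputable def polySet (c : ℕ → ℚ) (n : ℕ) (r : ℚ_[p]) : Finset ℚ_[p] :=
  (Finset.range (n + 1)).biUnion (fun k => ratSet (c k)) ∪ powSet r n ∪
    Finset.image (fun k : ℕ => ((c k : ℚ_[p]) * r ^ k)) (Finset.range (n + 1)) ∪
    Finset.image (fun k : ℕ => ∑ i ∈ Finset.range k, ((c i : ℚ_[p]) * r ^ i))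
      (Finset.range (n + 2))

lemma good_poly {f : ℚ_[p] → ℚ_[p]} {c : ℕ → ℚ} {n : ℕ} {r : ℚ_[p]}
    (h : Good f (polySet c n r)) (hn : 1 ≤ n)
    (hroot : ∑ i ∈ Finset.range (n + 1), ((c i : ℚ_[p]) * r ^ i) = 0) :
    ∑ i ∈ Finset.range (n + 1), ((c i : ℚ_[p]) * (f r) ^ i) = 0 := by
  have hsub1 : (Finset.range (n + 1)).biUnion (fun k => ratSet (c k)) ⊆ polySet c n r := by
    unfold polySet
    intro x hx
    exact Finset.mem_union_left _ (Finset.mem_union_left _ (Finset.mem_union_left _ hx))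
  have hsub2 : powSet r n ⊆ polySet c n r := by
    unfold polySet
    intro x hx
    exact Finset.mem_union_left _ (Finset.mem_union_left _ (Finset.mem_union_right _ hx))
  have hrat : ∀ k, k ≤ n → f ((c k : ℚ_[p])) = (c k : ℚ_[p]) := by
    intro k hk
    refine good_rat (h.mono ?_)
    refine subset_trans ?_ hsub1
    intro x hx
    exact Finset.mem_biUnion.2 ⟨k, Finset.mem_range.2 (by omega), hx⟩
  have hpow := good_pow (h.mono hsub2) hn
  have hmonomem : ∀ k, k ≤ n → ((c k : ℚ_[p]) * r ^ k) ∈ polySet c n r := by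
    intro k hk
    unfold polySet
    refine Finset.mem_union_left _ (Finset.mem_union_right _ ?_)
    exact Finset.mem_image.2 ⟨k, Finset.mem_range.2 (by omega), rfl⟩
  have hsummem : ∀ k, k ≤ n + 1 →
      (∑ i ∈ Finset.range k, ((c i : ℚ_[p]) * r ^ i)) ∈ polySet c n r := by
    intro k hk
    unfold polySet
    exact Finset.mem_union_right _
      (Finset.mem_image.2 ⟨k, Finset.mem_range.2 (by omega), rfl⟩)
  have hratmem : ∀ k, k ≤ n → ((c k : ℚ_[p])) ∈ polySet c n r := by
    intro k hk
    refine hsub1 (Finset.mem_biUnion.2 ⟨k, Finset.mem_range.2 (by omega), ?_⟩)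
    exact Finset.mem_union_right _ (by simp)
  have hmono : ∀ k, k ≤ n → f ((c k : ℚ_[p]) * r ^ k) = (c k : ℚ_[p]) * (f r) ^ k := by
    intro k hk
    have := h.2.2 _ _ (hratmem k hk) (hsub2 (mem_powSet hk)) (hmonomem k hk)
    rw [this, hrat k hk, hpow k hk]
  have hzero : f 0 = 0 := by
    have m0 : (0 : ℚ_[p]) ∈ polySet c n r := by
      have := hsummem 0 (by omega)
      simpa using this
    have := h.2.1 0 0 m0 m0 (by simpa using m0)
    rw [add_zero] at this
    exact left_eq_add.1 this
  have hpsum : ∀ k, k ≤ n + 1 →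
      f (∑ i ∈ Finset.range k, ((c i : ℚ_[p]) * r ^ i)) =
        ∑ i ∈ Finset.range k, ((c i : ℚ_[p]) * (f r) ^ i) := by
    intro k
    induction k with
    | zero => intro _; simpa using hzero
    | succ k ih =>
      intro hk
      have hstep := h.2.1 _ _ (hsummem k (by omega)) (hmonomem k (by omega))
        (by rw [← Finset.sum_range_succ]; exact hsummem (k + 1) hk)
      rw [Finset.sum_range_succ, hstep, ih (by omega), hmono k (by omega),
        Finset.sum_range_succ]
  have := hpsum (n + 1) le_rfl
  rw [hroot, hzero] at this
  exact this.symm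

lemma exists_eth_root (e : ℕ) (he : 2 ≤ e) (hpe : ¬ ((p : ℤ) ∣ (e : ℤ)))
    (t : ℚ_[p]) (ht : ‖t‖ ≤ 1) :
    ∃ y : ℚ_[p], y ^ e = 1 + (p : ℚ_[p]) * t ^ e := by
  have hp : p.Prime := Fact.out
  set T : ℤ_[p] := ⟨t, ht⟩ with hT
  set F : Polynomial ℤ_[p] :=
    Polynomial.X ^ e - Polynomial.C (1 + (p : ℤ_[p]) * T ^ e) with hF
  have heval : F.eval 1 = -((p : ℤ_[p]) * T ^ e) := by
    simp [hF]
  have hderiv' : F.derivative = Polynomial.C (e : ℤ_[p]) * Polynomial.X ^ (e - 1) := by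
    rw [hF, Polynomial.derivative_sub, Polynomial.derivative_C, Polynomial.derivative_X_pow]
    ring
  have hderiv : F.derivative.eval 1 = (e : ℤ_[p]) := by
    rw [hderiv']; simp
  have hnormd : ‖F.derivative.eval 1‖ = 1 := by
    rw [hderiv]
    have hle : ‖((e : ℤ) : ℤ_[p])‖ ≤ 1 := PadicInt.norm_le_one _
    have hlt : ¬ ‖((e : ℤ) : ℤ_[p])‖ < 1 := by
      rw [PadicInt.norm_int_lt_one_iff_dvd]
      exact hpe
    have : ‖((e : ℤ) : ℤ_[p])‖ = 1 := le_antisymm hle (not_lt.1 hlt)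
    simpa using this
  have hnorm : ‖F.eval 1‖ < ‖F.derivative.eval 1‖ ^ 2 := by
    rw [heval, hnormd, one_pow, norm_neg]
    calc ‖(p : ℤ_[p]) * T ^ e‖ ≤ ‖(p : ℤ_[p])‖ * 1 := by
          refine (norm_mul_le _ _).trans ?_
          exact mul_le_mul_of_nonneg_left (PadicInt.norm_le_one _) (norm_nonneg _)
      _ < 1 := by
          rw [mul_one, PadicInt.norm_p]
          rw [inv_lt_one₀ (by exact_mod_cast hp.pos)]
          exact_mod_cast hp.one_lt
  obtain ⟨z, hz, -⟩ := hensels_lemma hnorm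
  refine ⟨(z : ℚ_[p]), ?_⟩
  have hz' : z ^ e = 1 + (p : ℤ_[p]) * T ^ e := by
    have h0 : z ^ e - (1 + (p : ℤ_[p]) * T ^ e) = 0 := by
      simpa [hF] using hz
    exact sub_eq_zero.1 h0
  have := congrArg (fun w : ℤ_[p] => (w : ℚ_[p])) hz'
  push_cast at this
  simpa [hT] using this

lemma padic_valuation_pow (x : ℚ_[p]) (hx : x ≠ 0) (e : ℕ) :
    (x ^ e).valuation = e * x.valuation := by
  induction e with
  | zero => simp [Padic.valuation_one]
  | succ e ih =>
    rw [pow_succ, Padic.valuation_mul (pow_ne_zero _ hx) hx, ih]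
    push_cast
    ring

lemma no_eth_root (e : ℕ) (he : 2 ≤ e) (x y : ℚ_[p]) (hx : 1 < ‖x‖) :
    y ^ e ≠ 1 + (p : ℚ_[p]) * x ^ e := by
  intro heq
  have hp : p.Prime := Fact.out
  have hp1 : (1 : ℝ) < (p : ℝ) := by exact_mod_cast hp.one_lt
  have hp0 : (0 : ℝ) < (p : ℝ) := by positivity
  have hx0 : x ≠ 0 := by rintro rfl; simp at hx; linarith
  have hpne : (p : ℚ_[p]) ≠ 0 := by exact_mod_cast (Nat.cast_ne_zero (R := ℚ_[p])).2 hp.ne_zero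
  set a : ℤ := x.valuation with ha
  have hxa : ‖x‖ = (p : ℝ) ^ (-a) := Padic.norm_eq_zpow_neg_valuation hx0
  have hA : a < 0 := by
    by_contra hcon
    push_neg at hcon
    have : ‖x‖ ≤ 1 := by
      rw [hxa, ← zpow_zero (p : ℝ)]
      apply zpow_le_zpow_right₀ (le_of_lt hp1)
      omega
    linarith
  have hterm : (p : ℚ_[p]) * x ^ e ≠ 0 := mul_ne_zero hpne (pow_ne_zero _ hx0)
  have hvterm : ((p : ℚ_[p]) * x ^ e).valuation = 1 + e * a := by
    rw [Padic.valuation_mul hpne (pow_ne_zero _ hx0), Padic.valuation_p,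
      padic_valuation_pow x hx0]
  have hnterm : ‖(p : ℚ_[p]) * x ^ e‖ = (p : ℝ) ^ (-(1 + (e : ℤ) * a)) := by
    rw [Padic.norm_eq_zpow_neg_valuation hterm, hvterm]
  have hgt : (1 : ℝ) < ‖(p : ℚ_[p]) * x ^ e‖ := by
    rw [hnterm, ← zpow_zero (p : ℝ)]
    apply zpow_lt_zpow_right₀ hp1
    have : (2 : ℤ) ≤ e := by exact_mod_cast he
    nlinarith
  have hne : ‖(1 : ℚ_[p])‖ ≠ ‖(p : ℚ_[p]) * x ^ e‖ := by
    rw [norm_one]; exact ne_of_lt hgt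
  have hsumnorm : ‖(1 : ℚ_[p]) + (p : ℚ_[p]) * x ^ e‖ = ‖(p : ℚ_[p]) * x ^ e‖ := by
    rw [Padic.add_eq_max_of_ne hne, norm_one, max_eq_right (le_of_lt hgt)]
  have hy0 : y ≠ 0 := by
    rintro rfl
    rw [zero_pow (by omega)] at heq
    have : ‖(1 : ℚ_[p]) + (p : ℚ_[p]) * x ^ e‖ = 0 := by rw [← heq]; simp
    rw [hsumnorm] at this
    exact hterm (norm_eq_zero.1 this)
  set b : ℤ := y.valuation with hb
  have hyv : (y ^ e).valuation = e * b := padic_valuation_pow y hy0 e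
  have hynorm : ‖y ^ e‖ = (p : ℝ) ^ (-((e : ℤ) * b)) := by
    rw [Padic.norm_eq_zpow_neg_valuation (pow_ne_zero _ hy0), hyv]
  have : (p : ℝ) ^ (-((e : ℤ) * b)) = (p : ℝ) ^ (-(1 + (e : ℤ) * a)) := by
    rw [← hynorm, ← hnterm, ← hsumnorm, heq]
  have hexp : -((e : ℤ) * b) = -(1 + (e : ℤ) * a) :=
    zpow_right_injective₀ hp0 (ne_of_gt hp1) this
  have hdvd : (e : ℤ) ∣ 1 := ⟨b - a, by linear_combination hexp⟩
  have : (e : ℤ) ≤ 1 := Int.le_of_dvd one_pos hdvd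
  have : (2 : ℤ) ≤ e := by exact_mod_cast he
  omega

noncomputable def witSet (r : ℚ_[p]) (q : ℚ) (N : ℕ) (e : ℕ) (t y : ℚ_[p]) :
    Finset ℚ_[p] :=
  ratSet q ∪ ratSet ((p : ℚ) ^ N) ∪ ratSet (p : ℚ) ∪
    ({r, r - (q : ℚ_[p]), t, t ^ 2, t ^ 3, (p : ℚ_[p]) * t ^ e,
      1 + (p : ℚ_[p]) * t ^ e, y, y ^ 2, y ^ 3} : Finset ℚ_[p])

set_option maxHeartbeats 2000000 in
lemma good_wit {f : ℚ_[p] → ℚ_[p]} {r : ℚ_[p]} {q : ℚ} {N e : ℕ} {t y : ℚ_[p]}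
    (he : e = 2 ∨ e = 3) (h : Good f (witSet r q N e t y))
    (ht : t * (p : ℚ_[p]) ^ N = r - (q : ℚ_[p]))
    (hy : y ^ e = 1 + (p : ℚ_[p]) * t ^ e) :
    (f y) ^ e = 1 + (p : ℚ_[p]) * ((f t) ^ e) ∧
      f t * (p : ℚ_[p]) ^ N = f r - (q : ℚ_[p]) := by
  have hsubq : ratSet q ⊆ witSet r q N e t y := by
    intro x hx
    exact Finset.mem_union_left _ (Finset.mem_union_left _ (Finset.mem_union_left _ hx))
  have hsubP : ratSet ((p : ℚ) ^ N) ⊆ witSet r q N e t y := by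
    intro x hx
    exact Finset.mem_union_left _ (Finset.mem_union_left _ (Finset.mem_union_right _ hx))
  have hsubp : ratSet (p : ℚ) ⊆ witSet r q N e t y := by
    intro x hx
    exact Finset.mem_union_left _ (Finset.mem_union_right _ hx)
  have hsubE : ({r, r - (q : ℚ_[p]), t, t ^ 2, t ^ 3, (p : ℚ_[p]) * t ^ e,
      1 + (p : ℚ_[p]) * t ^ e, y, y ^ 2, y ^ 3} : Finset ℚ_[p]) ⊆ witSet r q N e t y :=
    Finset.subset_union_right
  have memE : ∀ x : ℚ_[p], x ∈ ({r, r - (q : ℚ_[p]), t, t ^ 2, t ^ 3, (p : ℚ_[p]) * t ^ e,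
      1 + (p : ℚ_[p]) * t ^ e, y, y ^ 2, y ^ 3} : Finset ℚ_[p]) → x ∈ witSet r q N e t y :=
    fun x hx => hsubE hx
  have hq : f (q : ℚ_[p]) = (q : ℚ_[p]) := good_rat (h.mono hsubq)
  have hP : f ((p : ℚ_[p]) ^ N) = (p : ℚ_[p]) ^ N := by
    have := good_rat (h.mono hsubP)
    push_cast at this
    exact this
  have hpp : f (p : ℚ_[p]) = (p : ℚ_[p]) := by
    have := good_rat (h.mono hsubp)
    push_cast at this
    exact this
  have h1 : f 1 = 1 := h.1 (hsubq (one_mem_ratSet q))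
  have mq : (q : ℚ_[p]) ∈ witSet r q N e t y :=
    hsubq (Finset.mem_union_right _ (by simp))
  have mP : (p : ℚ_[p]) ^ N ∈ witSet r q N e t y := by
    have : ((((p : ℚ) ^ N) : ℚ) : ℚ_[p]) ∈ witSet r q N e t y :=
      hsubP (Finset.mem_union_right _ (by simp))
    push_cast at this
    exact this
  have mp' : (p : ℚ_[p]) ∈ witSet r q N e t y := by
    have : (((p : ℚ)) : ℚ_[p]) ∈ witSet r q N e t y :=
      hsubp (Finset.mem_union_right _ (by simp))
    push_cast at this
    exact this
  have m1 : (1 : ℚ_[p]) ∈ witSet r q N e t y := hsubq (one_mem_ratSet q)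
  have mr : r ∈ witSet r q N e t y := memE _ (by simp)
  have md : r - (q : ℚ_[p]) ∈ witSet r q N e t y := memE _ (by simp)
  have mt : t ∈ witSet r q N e t y := memE _ (by simp)
  have mt2 : t ^ 2 ∈ witSet r q N e t y := memE _ (by simp)
  have mt3 : t ^ 3 ∈ witSet r q N e t y := memE _ (by simp)
  have mte : t ^ e ∈ witSet r q N e t y := by
    rcases he with rfl | rfl
    · exact mt2
    · exact mt3
  have mpt : (p : ℚ_[p]) * t ^ e ∈ witSet r q N e t y := memE _ (by simp)
  have ms : 1 + (p : ℚ_[p]) * t ^ e ∈ witSet r q N e t y := memE _ (by simp)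
  have my : y ∈ witSet r q N e t y := memE _ (by simp)
  have my2 : y ^ 2 ∈ witSet r q N e t y := memE _ (by simp)
  have my3 : y ^ 3 ∈ witSet r q N e t y := memE _ (by simp)
  -- f (r - q) = f r - q
  have hd : f (r - (q : ℚ_[p])) = f r - (q : ℚ_[p]) := by
    have := h.2.1 (r - (q : ℚ_[p])) (q : ℚ_[p]) md mq (by simpa using mr)
    rw [sub_add_cancel] at this
    rw [this, hq]
    ring
  -- f t * p^N = f r - q
  have hft : f t * (p : ℚ_[p]) ^ N = f r - (q : ℚ_[p]) := by
    have := h.2.2 t ((p : ℚ_[p]) ^ N) mt mP (by rw [ht]; exact md)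
    rw [ht, hd, hP] at this
    exact this.symm
  -- powers
  have ht2 : f (t ^ 2) = (f t) ^ 2 := by
    have := h.2.2 t t mt mt (by rw [← sq]; exact mt2)
    rw [← sq] at this
    rw [this, sq]
  have hpowt : f (t ^ e) = (f t) ^ e := by
    rcases he with rfl | rfl
    · exact ht2
    · have := h.2.2 (t ^ 2) t mt2 mt (by rw [← pow_succ]; exact mt3)
      rw [← pow_succ] at this
      rw [this, ht2]; ring
  have hy2 : f (y ^ 2) = (f y) ^ 2 := by
    have := h.2.2 y y my my (by rw [← sq]; exact my2)
    rw [← sq] at this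
    rw [this, sq]
  have hpowy : f (y ^ e) = (f y) ^ e := by
    rcases he with rfl | rfl
    · exact hy2
    · have := h.2.2 (y ^ 2) y my2 my (by rw [← pow_succ]; exact my3)
      rw [← pow_succ] at this
      rw [this, hy2]; ring
  have hpt : f ((p : ℚ_[p]) * t ^ e) = (p : ℚ_[p]) * (f t) ^ e := by
    have := h.2.2 (p : ℚ_[p]) (t ^ e) mp' mte mpt
    rw [this, hpp, hpowt]
  have hsum : f (1 + (p : ℚ_[p]) * t ^ e) = 1 + (p : ℚ_[p]) * (f t) ^ e := by
    have := h.2.1 1 ((p : ℚ_[p]) * t ^ e) m1 mpt ms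
    rw [this, h1, hpt]
  refine ⟨?_, hft⟩
  rw [← hpowy, hy, hsum]

lemma exists_witness (r s : ℚ_[p]) (hs : s ≠ r) :
    ∃ W : Finset ℚ_[p], ∀ f, Good f W → f r ≠ s := by
  have hp : p.Prime := Fact.out
  have hp1 : (1 : ℝ) < (p : ℝ) := by exact_mod_cast hp.one_lt
  have hp0 : (0 : ℝ) < (p : ℝ) := by positivity
  set e : ℕ := if p = 2 then 3 else 2 with hedef
  have he : e = 2 ∨ e = 3 := by
    by_cases h2 : p = 2 <;> simp [hedef, h2]
  have he2 : 2 ≤ e := by rcases he with h | h <;> omega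
  have hpe : ¬ ((p : ℤ) ∣ (e : ℤ)) := by
    rw [Int.natCast_dvd_natCast]
    by_cases h2 : p = 2
    · subst h2
      simp only [hedef, if_pos rfl]
      norm_num
    · simp only [hedef, if_neg h2]
      intro hdvd
      exact h2 ((Nat.prime_dvd_prime_iff_eq hp Nat.prime_two).1 hdvd)
  have hdpos : 0 < ‖s - r‖ := by
    rw [norm_pos_iff]
    exact sub_ne_zero.2 hs
  obtain ⟨N, hN⟩ := exists_pow_lt_of_lt_one hdpos
    (by rw [inv_lt_one₀ hp0]; exact hp1 : (p : ℝ)⁻¹ < 1)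
  have hNlt : (p : ℝ) ^ (-(N : ℤ)) < ‖s - r‖ := by
    rw [zpow_neg, zpow_natCast]
    simpa [inv_pow] using hN
  have hNpos : (0 : ℝ) < (p : ℝ) ^ (-(N : ℤ)) := by positivity
  obtain ⟨q, hq⟩ := Padic.rat_dense p r hNpos
  have hPn0 : ((p : ℚ_[p]) ^ N) ≠ 0 := by
    apply pow_ne_zero
    exact_mod_cast (Nat.cast_ne_zero (R := ℚ_[p])).2 hp.ne_zero
  have hPnorm : ‖(p : ℚ_[p]) ^ N‖ = (p : ℝ) ^ (-(N : ℤ)) := Padic.norm_p_pow N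
  set t : ℚ_[p] := (r - (q : ℚ_[p])) / (p : ℚ_[p]) ^ N with htdef
  have ht : t * (p : ℚ_[p]) ^ N = r - (q : ℚ_[p]) := div_mul_cancel₀ _ hPn0
  have htnorm : ‖t‖ ≤ 1 := by
    rw [htdef, norm_div, hPnorm]
    rw [div_le_one hNpos]
    exact le_of_lt hq
  obtain ⟨y, hy⟩ := exists_eth_root e he2 hpe t htnorm
  refine ⟨witSet r q N e t y, ?_⟩
  intro f hf hfr
  obtain ⟨hye, hft⟩ := good_wit he hf ht hy
  rw [hfr] at hft
  have hsq : s - (q : ℚ_[p]) = (s - r) + (r - (q : ℚ_[p])) := by ring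
  have hnormne : ‖s - r‖ ≠ ‖r - (q : ℚ_[p])‖ := by
    intro hcon
    rw [← hcon] at hq
    linarith
  have hsqnorm : ‖s - (q : ℚ_[p])‖ = ‖s - r‖ := by
    rw [hsq, Padic.add_eq_max_of_ne hnormne, max_eq_left]
    linarith
  have hftnorm : 1 < ‖f t‖ := by
    have : f t = (s - (q : ℚ_[p])) / (p : ℚ_[p]) ^ N := by
      rw [eq_div_iff hPn0]
      exact hft
    rw [this, norm_div, hPnorm, hsqnorm]
    rw [lt_div_iff₀ hNpos, one_mul]
    exact hNlt
  exact no_eth_root e he2 (f t) (f y) hftnorm hye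

end PadicAdequate

open PadicAdequate in
/-- Every element of ℚ_p algebraic over ℚ admits a finite adequate set. -/
theorem padic_algebraic_mem_tilde (p : ℕ) [Fact p.Prime] (r : ℚ_[p])
    (hr : IsAlgebraic ℚ r) : ∃ A : Finset ℚ_[p], Adequate A r := by
  classical
  obtain ⟨g, hg0, hgr⟩ := hr
  set n : ℕ := g.natDegree with hn
  have hn1 : 1 ≤ n := by
    by_contra hcon
    push_neg at hcon
    interval_cases n
    · have hgC : g = Polynomial.C (g.coeff 0) := Polynomial.eq_C_of_natDegree_eq_zero hn.symm
      rw [hgC] at hgr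
      rw [Polynomial.aeval_C] at hgr
      have : g.coeff 0 = 0 := by
        exact_mod_cast (map_eq_zero (algebraMap ℚ ℚ_[p])).1 hgr
      rw [this, map_zero] at hgC
      exact hg0 hgC
  set c : ℕ → ℚ := fun i => g.coeff i with hc
  have hsum : ∀ z : ℚ_[p],
      (Polynomial.aeval z) g = ∑ i ∈ Finset.range (n + 1), ((c i : ℚ_[p]) * z ^ i) := by
    intro z
    rw [Polynomial.aeval_eq_sum_range]
    refine Finset.sum_congr rfl fun i _ => ?_
    rw [Rat.smul_def]
  have hroot : ∑ i ∈ Finset.range (n + 1), ((c i : ℚ_[p]) * r ^ i) = 0 := by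
    rw [← hsum, hgr]
  set S : Finset ℚ_[p] := ((g.map (algebraMap ℚ ℚ_[p])).roots).toFinset with hS
  have hmemS : ∀ z : ℚ_[p],
      (∑ i ∈ Finset.range (n + 1), ((c i : ℚ_[p]) * z ^ i)) = 0 → z ∈ S := by
    intro z hz
    rw [hS, Multiset.mem_toFinset, Polynomial.mem_roots']
    constructor
    · exact Polynomial.map_ne_zero hg0
    · rw [Polynomial.IsRoot, Polynomial.eval_map, ← Polynomial.aeval_def, hsum, hz]
  have key : ∀ s : ℚ_[p], ∃ W : Finset ℚ_[p], s ≠ r → ∀ f, Good f W → f r ≠ s := by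
    intro s
    by_cases hsr : s = r
    · exact ⟨∅, fun h => absurd hsr h⟩
    · obtain ⟨W, hW⟩ := exists_witness r s hsr
      exact ⟨W, fun _ => hW⟩
  choose W hW using key
  refine ⟨polySet c n r ∪ S.biUnion W, ?_, ?_⟩
  · refine Finset.mem_union_left _ ?_
    have hr1 : r ^ 1 ∈ powSet r n := mem_powSet hn1
    rw [pow_one] at hr1
    unfold polySet
    exact Finset.mem_union_left _ (Finset.mem_union_left _ (Finset.mem_union_right _ hr1))
  · intro f h1 h2 h3
    have hgood : Good f (polySet c n r ∪ S.biUnion W) := ⟨h1, h2, h3⟩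
    have hfroot := good_poly (hgood.mono Finset.subset_union_left) hn1 hroot
    have hfS : f r ∈ S := hmemS _ hfroot
    by_contra hne
    have hWsub : W (f r) ⊆ polySet c n r ∪ S.biUnion W := by
      intro x hx
      exact Finset.mem_union_right _ (Finset.mem_biUnion.2 ⟨f r, hfS, hx⟩)
    exact hW (f r) hne f (hgood.mono hWsub) rfl
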